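/- arXiv:2309.07329 — 4 statements merged into one kernel-verified Lean document; each statement's English description precedes it below -/
import Mathlib

section
/- For all ρ, ρ̄ > 0 and γ > 1, the inequality |ρ^{γ-1} - ρ̄^{γ-1}| · |ρ - ρ̄| ≤ ((ρ^γ - ρ̄^γ)(ρ - ρ̄))^{γ/(γ+1)} holds. -/
lemma rpow_subadd (x y θ : ℝ) (hx : 0 ≤ x) (hy : 0 ≤ y) (h0 : 0 ≤ θ) (h1 : θ ≤ 1) :
    (x + y) ^ θ ≤ x ^ θ + y ^ θ := by
  have h := NNReal.rpow_add_le_add_rpow x.toNNReal y.toNNReal h0 h1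
  have h2 := NNReal.coe_le_coe.2 h
  push_cast at h2
  rwa [Real.coe_toNNReal x hx, Real.coe_toNNReal y hy] at h2

lemma rpow_superadd (x y γ : ℝ) (hx : 0 ≤ x) (hy : 0 ≤ y) (hγ : 1 ≤ γ) :
    x ^ γ + y ^ γ ≤ (x + y) ^ γ := by
  have h := NNReal.add_rpow_le_rpow_add x.toNNReal y.toNNReal hγ
  have h2 := NNReal.coe_le_coe.2 h
  push_cast at h2
  rwa [Real.coe_toNNReal x hx, Real.coe_toNNReal y hy] at h2

lemma key (a b γ : ℝ) (hb : 0 < b) (hab : b ≤ a) (hγ : 1 < γ) :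
    (a ^ (γ - 1) - b ^ (γ - 1)) * (a - b) ≤
      ((a ^ γ - b ^ γ) * (a - b)) ^ (γ / (γ + 1)) := by
  have hγ0 : (0:ℝ) < γ := by linarith
  have hγ1 : (0:ℝ) < γ + 1 := by linarith
  rcases eq_or_lt_of_le hab with rfl | hlt
  · simp
    positivity
  have ha : 0 < a := lt_trans hb hlt
  set d : ℝ := a - b with hd
  have hdpos : 0 < d := by simp [hd]; linarith
  set D : ℝ := a ^ γ - b ^ γ with hD
  have hDpos : 0 < D := by
    have := Real.rpow_lt_rpow hb.le hlt hγ0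
    simp [hD]; linarith
  -- step 2 : d ^ γ ≤ D
  have step2 : d ^ γ ≤ D := by
    have h := rpow_superadd d b γ hdpos.le hb.le hγ.le
    have : d + b = a := by simp [hd]
    rw [this] at h
    simp [hD]; linarith
  -- step 1 : a^(γ-1) - b^(γ-1) ≤ D ^ ((γ-1)/γ)
  have step1 : a ^ (γ - 1) - b ^ (γ - 1) ≤ D ^ ((γ - 1) / γ) := by
    have hsplit : a ^ γ = b ^ γ + D := by simp [hD]
    have h := rpow_subadd (b ^ γ) D ((γ - 1) / γ) (by positivity) hDpos.le
      (div_nonneg (by linarith) hγ0.le) (by rw [div_le_one hγ0]; linarith)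
    rw [← hsplit] at h
    have hexp : γ * ((γ - 1) / γ) = γ - 1 := by field_simp
    rw [← Real.rpow_mul ha.le, ← Real.rpow_mul hb.le, hexp] at h
    linarith
  calc (a ^ (γ - 1) - b ^ (γ - 1)) * d ≤ D ^ ((γ - 1) / γ) * d :=
        mul_le_mul_of_nonneg_right step1 hdpos.le
    _ ≤ (D * d) ^ (γ / (γ + 1)) := by
        rw [Real.mul_rpow hDpos.le hdpos.le]
        have h1 : d ^ (1 / (γ + 1)) ≤ D ^ (1 / (γ * (γ + 1))) := by
          have := Real.rpow_le_rpow (by positivity) step2 (le_of_lt (by positivity :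
            (0:ℝ) < 1 / (γ * (γ + 1))))
          rwa [← Real.rpow_mul hdpos.le, show γ * (1 / (γ * (γ + 1))) = 1 / (γ + 1) by
            field_simp] at this
        have hmul : D ^ ((γ - 1) / γ) * d ^ (1 / (γ + 1)) ≤ D ^ (γ / (γ + 1)) := by
          calc D ^ ((γ - 1) / γ) * d ^ (1 / (γ + 1))
              ≤ D ^ ((γ - 1) / γ) * D ^ (1 / (γ * (γ + 1))) :=
                mul_le_mul_of_nonneg_left h1 (Real.rpow_nonneg hDpos.le _)
            _ = D ^ (γ / (γ + 1)) := by
                rw [← Real.rpow_add hDpos]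
                congr 1
                field_simp
                ring
        calc D ^ ((γ - 1) / γ) * d
            = D ^ ((γ - 1) / γ) * d ^ (1 / (γ + 1)) * d ^ (γ / (γ + 1)) := by
              rw [mul_assoc, ← Real.rpow_add hdpos,
                show (1 / (γ + 1) + γ / (γ + 1)) = 1 by field_simp; ring, Real.rpow_one]
          _ ≤ D ^ (γ / (γ + 1)) * d ^ (γ / (γ + 1)) :=
              mul_le_mul_of_nonneg_right hmul (Real.rpow_nonneg hdpos.le _)

theorem stmt1 (ρ ρb γ : ℝ) (hρ : 0 < ρ) (hρb : 0 < ρb) (hγ : 1 < γ) :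
    |ρ ^ (γ - 1) - ρb ^ (γ - 1)| * |ρ - ρb| ≤
      ((ρ ^ γ - ρb ^ γ) * (ρ - ρb)) ^ (γ / (γ + 1)) := by
  rcases le_total ρb ρ with h | h
  · have h1 : 0 ≤ ρ ^ (γ - 1) - ρb ^ (γ - 1) :=
      sub_nonneg.2 (Real.rpow_le_rpow hρb.le h (by linarith))
    have h2 : 0 ≤ ρ - ρb := sub_nonneg.2 h
    rw [abs_of_nonneg h1, abs_of_nonneg h2]
    exact key ρ ρb γ hρb h hγ
  · have h1 : 0 ≤ ρb ^ (γ - 1) - ρ ^ (γ - 1) :=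
      sub_nonneg.2 (Real.rpow_le_rpow hρ.le h (by linarith))
    have h2 : 0 ≤ ρb - ρ := sub_nonneg.2 h
    rw [abs_sub_comm, abs_of_nonneg h1, abs_sub_comm ρ ρb, abs_of_nonneg h2]
    have := key ρb ρ γ hρ h hγ
    calc (ρb ^ (γ - 1) - ρ ^ (γ - 1)) * (ρb - ρ)
        ≤ ((ρb ^ γ - ρ ^ γ) * (ρb - ρ)) ^ (γ / (γ + 1)) := this
      _ = ((ρ ^ γ - ρb ^ γ) * (ρ - ρb)) ^ (γ / (γ + 1)) := by ring_nf
end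

section
/- Let ρ > ρ̄ ≥ 0, γ > 1, u = ρ^{γ-1}, ū = ρ̄^{γ-1}, and a ∈ [0,1]. Then ρ^γ - ρ̄^γ ≥ (u - ū)^{aγ/(γ-1)} · (ρ - ρ̄)^{(1-a)γ}. -/
open Real NNReal

lemma aux_superadd (s t p : ℝ) (hs : 0 ≤ s) (ht : 0 ≤ t) (hp : 1 ≤ p) :
    s ^ p + t ^ p ≤ (s + t) ^ p := by
  have h := NNReal.add_rpow_le_rpow_add s.toNNReal t.toNNReal hp
  have h2 : ((s.toNNReal ^ p + t.toNNReal ^ p : ℝ≥0) : ℝ) ≤ ((s.toNNReal + t.toNNReal) ^ p : ℝ≥0) :=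
    NNReal.coe_le_coe.mpr h
  simpa [NNReal.coe_rpow, Real.coe_toNNReal _ hs, Real.coe_toNNReal _ ht,
    Real.coe_toNNReal _ (add_nonneg hs ht)] using h2

lemma aux_sub_rpow (x y p : ℝ) (hy : 0 ≤ y) (hxy : y ≤ x) (hp : 1 ≤ p) :
    (x - y) ^ p ≤ x ^ p - y ^ p := by
  have h := aux_superadd (x - y) y p (by linarith) hy hp
  rw [sub_add_cancel] at h
  linarith

theorem stmt9 (ρ ρb γ a : ℝ) (hρb : 0 ≤ ρb) (hρ : ρb < ρ) (hγ : 1 < γ)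
    (ha : a ∈ Set.Icc (0 : ℝ) 1) :
    ρ ^ γ - ρb ^ γ ≥
      (ρ ^ (γ - 1) - ρb ^ (γ - 1)) ^ (a * γ / (γ - 1)) * (ρ - ρb) ^ ((1 - a) * γ) := by
  obtain ⟨ha0, ha1⟩ := ha
  have hρ0 : 0 < ρ := lt_of_le_of_lt hρb hρ
  have hγ1 : 0 < γ - 1 := by linarith
  set α : ℝ := γ / (γ - 1) with hα
  have hα1 : 1 ≤ α := by
    rw [hα, le_div_iff₀ hγ1]; linarith
  have hu : ρb ^ (γ - 1) ≤ ρ ^ (γ - 1) :=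
    Real.rpow_le_rpow hρb hρ.le (le_of_lt hγ1)
  have hub0 : 0 ≤ ρb ^ (γ - 1) := Real.rpow_nonneg hρb _
  have hXpos : 0 < ρ ^ γ - ρb ^ γ := by
    have := Real.rpow_lt_rpow hρb hρ (by linarith : (0:ℝ) < γ)
    linarith
  have key1 : (ρ ^ (γ - 1) - ρb ^ (γ - 1)) ^ α ≤ ρ ^ γ - ρb ^ γ := by
    have h := aux_sub_rpow (ρ ^ (γ - 1)) (ρb ^ (γ - 1)) α hub0 hu hα1
    have hγα : (γ - 1) * α = γ := by
      rw [hα, mul_comm, div_mul_cancel₀ _ hγ1.ne']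
    have e1 : (ρ ^ (γ - 1)) ^ α = ρ ^ γ := by
      rw [← Real.rpow_mul hρ0.le, hγα]
    have e2 : (ρb ^ (γ - 1)) ^ α = ρb ^ γ := by
      rw [← Real.rpow_mul hρb, hγα]
    rw [e1, e2] at h; exact h
  have key2 : (ρ - ρb) ^ γ ≤ ρ ^ γ - ρb ^ γ :=
    aux_sub_rpow ρ ρb γ hρb hρ.le hγ.le
  have hd0 : 0 ≤ ρ ^ (γ - 1) - ρb ^ (γ - 1) := by linarith
  have hs0 : 0 ≤ ρ - ρb := by linarith
  have r1 : (ρ ^ (γ - 1) - ρb ^ (γ - 1)) ^ (a * γ / (γ - 1))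
      = ((ρ ^ (γ - 1) - ρb ^ (γ - 1)) ^ α) ^ a := by
    rw [← Real.rpow_mul hd0]
    congr 1; rw [hα]; ring
  have r2 : (ρ - ρb) ^ ((1 - a) * γ) = ((ρ - ρb) ^ γ) ^ (1 - a) := by
    rw [← Real.rpow_mul hs0]
    congr 1; ring
  rw [ge_iff_le, r1, r2]
  have b1 : ((ρ ^ (γ - 1) - ρb ^ (γ - 1)) ^ α) ^ a ≤ (ρ ^ γ - ρb ^ γ) ^ a :=
    Real.rpow_le_rpow (Real.rpow_nonneg hd0 _) key1 ha0
  have b2 : ((ρ - ρb) ^ γ) ^ (1 - a) ≤ (ρ ^ γ - ρb ^ γ) ^ (1 - a) :=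
    Real.rpow_le_rpow (Real.rpow_nonneg hs0 _) key2 (by linarith)
  calc ((ρ ^ (γ - 1) - ρb ^ (γ - 1)) ^ α) ^ a * ((ρ - ρb) ^ γ) ^ (1 - a)
      ≤ (ρ ^ γ - ρb ^ γ) ^ a * (ρ ^ γ - ρb ^ γ) ^ (1 - a) := by
        apply mul_le_mul b1 b2 (Real.rpow_nonneg (Real.rpow_nonneg hs0 _) _)
          (Real.rpow_nonneg hXpos.le _)
    _ = ρ ^ γ - ρb ^ γ := by
        rw [← Real.rpow_add hXpos]; simp
end

section
/- Let N ∈ ℕ, Δt > 0, h : Fin N → ℝ positive cell widths, and a : Fin N → ℝ nonnegative with Δt ≤ min_i h_i / a_i (interpreting h_i/a_i = ∞ if a_i = 0). If ρ : Fin N → ℝ is nonnegative and for each i, F_{i+1/2} = c⁺_{i+1/2} ρ_i - c⁻_{i+1/2} ρ_{i+1} (indices mod N) with c⁺, c⁻ ≥ 0 and a_i ≥ c⁻_{i-1/2} + c⁺_{i+1/2}, then ρ_i - (Δt/h_i)(F_{i+1/2} - F_{i-1/2}) ≥ 0 for all i. -/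
theorem stmt14 (N : ℕ) [NeZero N] (Δt : ℝ) (hΔt : 0 < Δt)
    (h a ρ cp cm : ZMod N → ℝ)
    (hh : ∀ i, 0 < h i) (ha : ∀ i, 0 ≤ a i) (hρ : ∀ i, 0 ≤ ρ i)
    (hcp : ∀ i, 0 ≤ cp i) (hcm : ∀ i, 0 ≤ cm i)
    (hcfl : ∀ i, Δt * a i ≤ h i)
    (hac : ∀ i, cm (i - 1) + cp i ≤ a i)
    (F : ZMod N → ℝ) (hF : ∀ i, F i = cp i * ρ i - cm i * ρ (i + 1)) :
    ∀ i, 0 ≤ ρ i - Δt / h i * (F i - F (i - 1)) := by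
  intro i
  have hhi := hh i
  have key : Δt * (cm (i - 1) + cp i) ≤ h i :=
    le_trans (by nlinarith [hac i]) (hcfl i)
  have e1 : F i = cp i * ρ i - cm i * ρ (i + 1) := hF i
  have e2 : F (i - 1) = cp (i - 1) * ρ (i - 1) - cm (i - 1) * ρ i := by
    rw [hF (i - 1)]; ring_nf
  rw [e1, e2, div_mul_eq_mul_div, le_sub_iff_add_le, zero_add, div_le_iff₀ hhi]
  nlinarith [mul_nonneg (mul_nonneg hΔt.le (hcm i)) (hρ (i + 1)),
    mul_nonneg (mul_nonneg hΔt.le (hcp (i - 1))) (hρ (i - 1)),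
    mul_le_mul_of_nonneg_left key (hρ i), hρ i, hhi]
end

section
/- Let A ∈ ℝ^{N×N} be a matrix with nonpositive diagonal entries, nonnegative off-diagonal entries, and each row summing to zero, and let Δt > 0. Then for any vector r ∈ ℝ^N with r ≥ 0 componentwise, any solution x of (I - Δt A) x = r satisfies x ≥ 0 componentwise. -/
theorem stmt15 (N : ℕ) (A : Matrix (Fin N) (Fin N) ℝ) (Δt : ℝ) (hΔt : 0 < Δt)
    (hdiag : ∀ i, A i i ≤ 0) (hoff : ∀ i j, i ≠ j → 0 ≤ A i j)
    (hrow : ∀ i, ∑ j, A i j = 0)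
    (r x : Fin N → ℝ) (hr : ∀ i, 0 ≤ r i)
    (hx : (1 - Δt • A).mulVec x = r) :
    ∀ i, 0 ≤ x i := by
  intro i
  obtain ⟨i₀, -, hmin⟩ := Finset.exists_min_image Finset.univ x ⟨i, Finset.mem_univ i⟩
  have hmin' : ∀ j, x i₀ ≤ x j := fun j => hmin j (Finset.mem_univ j)
  have hexp : x i₀ - Δt * ∑ j, A i₀ j * x j = r i₀ := by
    have h := congrFun hx i₀
    rw [← h]
    simp only [Matrix.mulVec, dotProduct, Matrix.sub_apply, Matrix.one_apply,
      Matrix.smul_apply, smul_eq_mul, sub_mul, Finset.sum_sub_distrib, Finset.mul_sum]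
    congr 1
    · simp [Finset.sum_ite_eq, ite_mul]
    · exact Finset.sum_congr rfl fun j _ => by ring
  have hsum : 0 ≤ ∑ j, A i₀ j * x j := by
    have h1 : ∑ j, A i₀ j * x i₀ ≤ ∑ j, A i₀ j * x j := by
      apply Finset.sum_le_sum
      intro j _
      by_cases hj : j = i₀
      · subst hj; rfl
      · exact mul_le_mul_of_nonneg_left (hmin' j) (hoff i₀ j (Ne.symm hj))
    calc (0:ℝ) = (∑ j, A i₀ j) * x i₀ := by rw [hrow i₀, zero_mul]
      _ = ∑ j, A i₀ j * x i₀ := by rw [Finset.sum_mul]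
      _ ≤ _ := h1
  have : 0 ≤ x i₀ := by
    have := hr i₀
    nlinarith [hsum, hΔt]
  exact le_trans this (hmin' i)
end
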